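/- Semi-discrete energy dissipation (Theorem 2.1, abstract form): suppose u, q : ℝ → V are differentiable curves such that for every t ∈ ℝ and all φ, ψ ∈ V one has ⟨u'(t), φ⟩ + b(u(t), φ) = −A(φ, q(t)) − ⟨∇F(u(t)), φ⟩ and ⟨q(t), ψ⟩ = A(u(t), ψ). Then the energy t ↦ E(t) := (1/2)‖q(t)‖² + F(u(t)) + (1/2) b(u(t), u(t)) is differentiable and satisfies E'(t) = −‖u'(t)‖² ≤ 0 for every t. -/

import Mathlib

/-- Semi-discrete energy dissipation (Theorem 2.1, abstract form). -/
theorem stmt_0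
    {V : Type*} [NormedAddCommGroup V] [InnerProductSpace ℝ V] [FiniteDimensional ℝ V]
    (A : V →ₗ[ℝ] V →ₗ[ℝ] ℝ)
    (b : V →ₗ[ℝ] V →ₗ[ℝ] ℝ)
    (hb_symm : ∀ x y : V, b x y = b y x)
    (hb_pos : ∀ x : V, 0 ≤ b x x)
    (F : V → ℝ) (gradF : V → V)
    (hF : ∀ u : V, HasFDerivAt F (innerSL ℝ (gradF u)) u)
    (u q u' q' : ℝ → V)
    (hu : ∀ t : ℝ, HasDerivAt u (u' t) t)
    (hq : ∀ t : ℝ, HasDerivAt q (q' t) t)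
    (heq1 : ∀ t : ℝ, ∀ φ : V,
      (inner ℝ (u' t) φ : ℝ) + b (u t) φ = -A φ (q t) - (inner ℝ (gradF (u t)) φ : ℝ))
    (heq2 : ∀ t : ℝ, ∀ ψ : V, (inner ℝ (q t) ψ : ℝ) = A (u t) ψ) :
    ∀ t : ℝ,
      HasDerivAt (fun s : ℝ => (1/2) * ‖q s‖^2 + F (u s) + (1/2) * b (u s) (u s))
        (-‖u' t‖^2) t ∧ -‖u' t‖^2 ≤ 0 := by
  intro t
  constructor
  · -- continuous version of b
    set e := (LinearMap.toContinuousLinearMap : (V →ₗ[ℝ] ℝ) ≃ₗ[ℝ] (V →L[ℝ] ℝ))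
    set B : V →L[ℝ] V →L[ℝ] ℝ :=
      LinearMap.toContinuousLinearMap (e.toLinearMap.comp b) with hB
    have hBapp : ∀ x y : V, B x y = b x y := by intro x y; simp [hB, e]
    -- derivative of the q-equation : ⟨q' t, ψ⟩ = A (u' t) ψ
    have hA' : ∀ ψ : V, (inner ℝ (q' t) ψ : ℝ) = A (u' t) ψ := by
      intro ψ
      have h1 : HasDerivAt (fun s => (inner ℝ (q s) ψ : ℝ))
          ((inner ℝ (q t) (0 : V) : ℝ) + (inner ℝ (q' t) ψ : ℝ)) t :=
        (hq t).inner ℝ (hasDerivAt_const t ψ)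
      have hL : HasDerivAt (fun s => (LinearMap.toContinuousLinearMap (A.flip ψ)) (u s))
          ((LinearMap.toContinuousLinearMap (A.flip ψ)) (u' t)) t :=
        (LinearMap.toContinuousLinearMap (A.flip ψ)).hasFDerivAt.comp_hasDerivAt t (hu t)
      have h2 : HasDerivAt (fun s => (inner ℝ (q s) ψ : ℝ)) (A (u' t) ψ) t := by
        simpa [heq2] using hL
      have := h1.unique h2
      simpa using this
    -- derivative of the norm-squared term
    have h1 : HasDerivAt (fun s => (inner ℝ (q s) (q s) : ℝ))
        ((inner ℝ (q t) (q' t) : ℝ) + (inner ℝ (q' t) (q t) : ℝ)) t :=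
      (hq t).inner ℝ (hq t)
    have h1' : HasDerivAt (fun s => (1/2 : ℝ) * ‖q s‖^2)
        ((1/2 : ℝ) * ((inner ℝ (q t) (q' t) : ℝ) + (inner ℝ (q' t) (q t) : ℝ))) t := by
      simpa [real_inner_self_eq_norm_sq] using h1.const_mul (1/2 : ℝ)
    -- derivative of F ∘ u
    have h2 : HasDerivAt (fun s => F (u s)) ((inner ℝ (gradF (u t)) (u' t) : ℝ)) t := by
      exact (hF (u t)).comp_hasDerivAt t (hu t)
    -- derivative of b term
    have hBu : HasDerivAt (fun s => B (u s)) (B (u' t)) t :=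
      B.hasFDerivAt.comp_hasDerivAt t (hu t)
    have h3 : HasDerivAt (fun s => B (u s) (u s)) (B (u' t) (u t) + B (u t) (u' t)) t :=
      hBu.clm_apply (hu t)
    have h3' : HasDerivAt (fun s => (1/2 : ℝ) * b (u s) (u s))
        ((1/2 : ℝ) * (B (u' t) (u t) + B (u t) (u' t))) t := by
      simpa [hBapp] using h3.const_mul (1/2 : ℝ)
    have htot := (h1'.add h2).add h3'
    have hval : (1/2 : ℝ) * ((inner ℝ (q t) (q' t) : ℝ) + (inner ℝ (q' t) (q t) : ℝ))
        + (inner ℝ (gradF (u t)) (u' t) : ℝ)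
        + (1/2 : ℝ) * (B (u' t) (u t) + B (u t) (u' t)) = -‖u' t‖^2 := by
      have e1 : (inner ℝ (q t) (q' t) : ℝ) = (inner ℝ (q' t) (q t) : ℝ) := real_inner_comm _ _
      have e2 : (inner ℝ (q' t) (q t) : ℝ) = A (u' t) (q t) := hA' (q t)
      have e3 := heq1 t (u' t)
      have e4 : (inner ℝ (u' t) (u' t) : ℝ) = ‖u' t‖^2 := real_inner_self_eq_norm_sq _
      have e5 : B (u' t) (u t) = b (u t) (u' t) := by rw [hBapp, hb_symm]
      have e6 : B (u t) (u' t) = b (u t) (u' t) := hBapp _ _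
      have e7 : (inner ℝ (gradF (u t)) (u' t) : ℝ) = (inner ℝ (u' t) (gradF (u t)) : ℝ) :=
        real_inner_comm _ _
      rw [e1, e2, e5, e6]
      have e8 : (inner ℝ (u' t) (gradF (u t)) : ℝ)
          = -A (u' t) (q t) - (inner ℝ (u' t) (u' t) : ℝ) - b (u t) (u' t) := by
        linarith [e3]
      rw [e7, e8, e4]
      ring
    rw [hval] at htot
    exact htot
  · have : (0:ℝ) ≤ ‖u' t‖^2 := sq_nonneg _
    linarith
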